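/- For every real t with |t| ≤ π²/4, it holds that |Φ(t) − 1| ≤ 4|t|/π², where Φ(x) := √(−x)·coth(√(−x)) for x < 0, Φ(0) := 1, and Φ(x) := √x·cot(√x) for 0 < x < π². -/

import Mathlib

open Real Set

section helpers

lemma nonneg_of_hasDerivAt (f f' : ℝ → ℝ) (hf : ∀ x, HasDerivAt f (f' x) x)
    (h0 : f 0 = 0) {b : ℝ} (hb : 0 ≤ b)
    (h' : ∀ x, 0 ≤ x → x ≤ b → 0 ≤ f' x) : 0 ≤ f b := by
  have hm : MonotoneOn f (Icc 0 b) := by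
    apply monotoneOn_of_deriv_nonneg (convex_Icc 0 b)
      (fun x _ => (hf x).continuousAt.continuousWithinAt)
      (fun x _ => (hf x).differentiableAt.differentiableWithinAt)
    intro x hx
    rw [interior_Icc] at hx
    rw [(hf x).deriv]
    exact h' x hx.1.le hx.2.le
  have := hm (left_mem_Icc.2 hb) (right_mem_Icc.2 hb) hb
  rwa [h0] at this

lemma L3_nonneg {y : ℝ} (h0 : 0 ≤ y) (h1 : y ≤ π) : 0 ≤ Real.sin y - y * Real.cos y := by
  refine nonneg_of_hasDerivAt (fun y => Real.sin y - y * Real.cos y)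
    (fun y => y * Real.sin y) (fun x => ?_) (by simp) h0 (fun x hx0 hxb => ?_)
  · have := (Real.hasDerivAt_sin x).sub ((hasDerivAt_id x).mul (Real.hasDerivAt_cos x))
    refine this.congr_deriv ?_
    simp only [id]; ring
  · exact mul_nonneg hx0 (Real.sin_nonneg_of_nonneg_of_le_pi hx0 (hxb.trans h1))

lemma L2_nonneg {y : ℝ} (h0 : 0 ≤ y) (h1 : y ≤ π) : 0 ≤ 2 - 2 * Real.cos y - y * Real.sin y := by
  refine nonneg_of_hasDerivAt (fun y => 2 - 2 * Real.cos y - y * Real.sin y)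
    (fun y => Real.sin y - y * Real.cos y) (fun x => ?_) (by simp) h0 (fun x hx0 hxb => ?_)
  · have := ((hasDerivAt_const x (2:ℝ)).sub ((hasDerivAt_const x (2:ℝ)).mul
      (Real.hasDerivAt_cos x))).sub ((hasDerivAt_id x).mul (Real.hasDerivAt_sin x))
    refine this.congr_deriv ?_
    simp only [id]; ring
  · exact L3_nonneg hx0 (hxb.trans h1)

lemma L1_nonneg {y : ℝ} (h0 : 0 ≤ y) (h1 : y ≤ π) :
    0 ≤ 2 * y - 3 * Real.sin y + y * Real.cos y := by
  refine nonneg_of_hasDerivAt (fun y => 2 * y - 3 * Real.sin y + y * Real.cos y)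
    (fun y => 2 - 2 * Real.cos y - y * Real.sin y) (fun x => ?_) (by simp) h0
    (fun x hx0 hxb => ?_)
  · have := (((hasDerivAt_const x (2:ℝ)).mul (hasDerivAt_id x)).sub
      ((hasDerivAt_const x (3:ℝ)).mul (Real.hasDerivAt_sin x))).add
      ((hasDerivAt_id x).mul (Real.hasDerivAt_cos x))
    refine this.congr_deriv ?_
    simp only [id]; ring
  · exact L2_nonneg hx0 (hxb.trans h1)

lemma L0_nonneg {y : ℝ} (h0 : 0 ≤ y) (h1 : y ≤ π) :
    0 ≤ y ^ 2 - 4 + 4 * Real.cos y + y * Real.sin y := by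
  refine nonneg_of_hasDerivAt (fun y => y ^ 2 - 4 + 4 * Real.cos y + y * Real.sin y)
    (fun y => 2 * y - 3 * Real.sin y + y * Real.cos y) (fun x => ?_) (by norm_num) h0
    (fun x hx0 hxb => ?_)
  · have := (((hasDerivAt_pow 2 x).sub (hasDerivAt_const x (4:ℝ))).add
      ((hasDerivAt_const x (4:ℝ)).mul (Real.hasDerivAt_cos x))).add
      ((hasDerivAt_id x).mul (Real.hasDerivAt_sin x))
    refine this.congr_deriv ?_
    simp only [id]; push_cast; ring
  · exact L1_nonneg hx0 (hxb.trans h1)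

lemma N_nonneg {x : ℝ} (h0 : 0 ≤ x) (h1 : x ≤ π / 2) :
    0 ≤ x * Real.sin x * (x ^ 2 * Real.sin x) -
      (Real.sin x - x * Real.cos x) * (2 * x * Real.sin x + x ^ 2 * Real.cos x) := by
  have h2 : (0:ℝ) ≤ 2 * x := by linarith
  have h3 : 2 * x ≤ π := by linarith
  have hL := L0_nonneg h2 h3
  rw [Real.cos_two_mul', Real.sin_two_mul] at hL
  have pyth := Real.sin_sq_add_cos_sq x
  have key : x * Real.sin x * (x ^ 2 * Real.sin x) -
      (Real.sin x - x * Real.cos x) * (2 * x * Real.sin x + x ^ 2 * Real.cos x) =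
      x / 4 * ((2 * x) ^ 2 - 4 + 4 * (Real.cos x ^ 2 - Real.sin x ^ 2) +
        2 * x * (2 * Real.sin x * Real.cos x)) := by
    linear_combination x ^ 3 * pyth - x * pyth
  rw [key]
  exact mul_nonneg (by linarith) hL

lemma hasDerivAt_u (c : ℝ) :
    HasDerivAt (fun y => Real.sin y - y * Real.cos y) (c * Real.sin c) c := by
  have := (Real.hasDerivAt_sin c).sub ((hasDerivAt_id c).mul (Real.hasDerivAt_cos c))
  refine this.congr_deriv ?_
  simp only [id]; ring

lemma hasDerivAt_v (c : ℝ) :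
    HasDerivAt (fun y => y ^ 2 * Real.sin y)
      (2 * c * Real.sin c + c ^ 2 * Real.cos c) c := by
  have := (hasDerivAt_pow 2 c).mul (Real.hasDerivAt_sin c)
  refine this.congr_deriv ?_
  push_cast; ring

lemma key_trig {x : ℝ} (hx0 : 0 < x) (hx1 : x ≤ π / 2) :
    Real.sin x - x * Real.cos x ≤ 4 / π ^ 2 * (x ^ 2 * Real.sin x) := by
  have hpi := Real.pi_pos
  set Q : ℝ → ℝ := fun y => (Real.sin y - y * Real.cos y) / (y ^ 2 * Real.sin y) with hQdef
  have hvne : ∀ c ∈ Icc x (π / 2), c ^ 2 * Real.sin c ≠ 0 := by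
    intro c hc
    have hc0 : 0 < c := lt_of_lt_of_le hx0 hc.1
    have hs : 0 < Real.sin c :=
      Real.sin_pos_of_pos_of_lt_pi hc0 (lt_of_le_of_lt hc.2 (by linarith))
    positivity
  have hmono : MonotoneOn Q (Icc x (π / 2)) := by
    apply monotoneOn_of_deriv_nonneg (convex_Icc _ _)
    · exact ContinuousOn.div
        (Continuous.continuousOn (by continuity))
        (Continuous.continuousOn (by continuity)) hvne
    · intro c hc
      rw [interior_Icc] at hc
      exact ((hasDerivAt_u c).div (hasDerivAt_v c)
        (hvne c ⟨hc.1.le, hc.2.le⟩)).differentiableAt.differentiableWithinAt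
    · intro c hc
      rw [interior_Icc] at hc
      have hd := (hasDerivAt_u c).div (hasDerivAt_v c) (hvne c ⟨hc.1.le, hc.2.le⟩)
      rw [(show HasDerivAt Q _ c from hd).deriv]
      apply div_nonneg _ (sq_nonneg _)
      exact N_nonneg (by linarith [hx0, hc.1]) hc.2.le
  have hle : Q x ≤ Q (π / 2) :=
    hmono ⟨le_refl x, hx1⟩ ⟨hx1, le_refl _⟩ hx1
  have hQhalf : Q (π / 2) = 4 / π ^ 2 := by
    simp only [hQdef, Real.sin_pi_div_two, Real.cos_pi_div_two]
    field_simp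
    ring
  rw [hQhalf] at hle
  have hs : 0 < Real.sin x :=
    Real.sin_pos_of_pos_of_lt_pi hx0 (lt_of_le_of_lt hx1 (by linarith))
  have hv : 0 < x ^ 2 * Real.sin x := by positivity
  calc Real.sin x - x * Real.cos x
      = Q x * (x ^ 2 * Real.sin x) := by
        rw [hQdef]; field_simp
    _ ≤ 4 / π ^ 2 * (x ^ 2 * Real.sin x) := by
        exact mul_le_mul_of_nonneg_right hle hv.le

lemma sinh_le_mul_cosh {x : ℝ} (hx : 0 ≤ x) : Real.sinh x ≤ x * Real.cosh x := by
  have := nonneg_of_hasDerivAt (fun y => y * Real.cosh y - Real.sinh y)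
    (fun y => y * Real.sinh y) (fun c => ?_) (by simp) hx
    (fun c hc0 _ => mul_nonneg hc0 (by rw [← Real.sinh_zero]; exact Real.sinh_le_sinh.2 hc0))
  · linarith
  · have := ((hasDerivAt_id c).mul (Real.hasDerivAt_cosh c)).sub (Real.hasDerivAt_sinh c)
    refine this.congr_deriv ?_
    simp only [id]; ring

lemma mul_cosh_le {x : ℝ} (hx : 0 ≤ x) :
    x * Real.cosh x ≤ (1 + x ^ 2 / 3) * Real.sinh x := by
  have := nonneg_of_hasDerivAt (fun y => (1 + y ^ 2 / 3) * Real.sinh y - y * Real.cosh y)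
    (fun y => y / 3 * (y * Real.cosh y - Real.sinh y)) (fun c => ?_) (by simp) hx
    (fun c hc0 _ => mul_nonneg (by linarith) (by linarith [sinh_le_mul_cosh hc0]))
  · linarith
  · have := (((hasDerivAt_const c (1:ℝ)).add ((hasDerivAt_pow 2 c).div_const 3)).mul
      (Real.hasDerivAt_sinh c)).sub ((hasDerivAt_id c).mul (Real.hasDerivAt_cosh c))
    refine this.congr_deriv ?_
    simp only [id, Pi.add_apply]; push_cast; ring

end helpers

/-- The function `Φ`, satisfying `Φ(K x²) = x cot_K x`. -/
noncomputable def Phi (x : ℝ) : ℝ :=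
  if x < 0 then Real.sqrt (-x) * (Real.cosh (Real.sqrt (-x)) / Real.sinh (Real.sqrt (-x)))
  else if x = 0 then 1
  else Real.sqrt x * (Real.cos (Real.sqrt x) / Real.sin (Real.sqrt x))

/-- `|Φ(t) - 1| ≤ 4|t|/π²` for `|t| ≤ π²/4`. -/
theorem Phi_near_one (t : ℝ) (ht : |t| ≤ Real.pi ^ 2 / 4) :
    |Phi t - 1| ≤ 4 * |t| / Real.pi ^ 2 := by
  have hpi := Real.pi_pos
  have hP : (0:ℝ) < π ^ 2 := by positivity
  rcases lt_trichotomy t 0 with htn | rfl | htp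
  · -- hyperbolic case
    set s := -t with hs
    have hs0 : 0 < s := by simp [hs]; linarith
    set x := Real.sqrt s with hxdef
    have hx0 : 0 < x := Real.sqrt_pos.2 hs0
    have hx2 : x ^ 2 = s := Real.sq_sqrt hs0.le
    have hsinh : 0 < Real.sinh x := Real.sinh_pos_iff.2 hx0
    have hPhi : Phi t = x * (Real.cosh x / Real.sinh x) := by
      rw [Phi, if_pos htn]
    have h1 : 1 ≤ Phi t := by
      rw [hPhi, ← mul_div_assoc, le_div_iff₀ hsinh, one_mul]
      exact sinh_le_mul_cosh hx0.le
    have h2 : Phi t ≤ 1 + s / 3 := by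
      rw [hPhi, ← mul_div_assoc, div_le_iff₀ hsinh]
      calc x * Real.cosh x ≤ (1 + x ^ 2 / 3) * Real.sinh x := mul_cosh_le hx0.le
        _ = (1 + s / 3) * Real.sinh x := by rw [hx2]
    have habs : |t| = s := abs_of_neg htn
    rw [habs, abs_of_nonneg (by linarith)]
    have hpilt : π < 3.15 := Real.pi_lt_d2
    have h12 : π ^ 2 ≤ 12 := by nlinarith
    calc Phi t - 1 ≤ s / 3 := by linarith
      _ ≤ 4 * s / π ^ 2 := by
          rw [div_le_div_iff₀ (by norm_num : (0:ℝ) < 3) hP]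
          nlinarith
  · -- zero case
    simp [Phi]
  · -- trig case
    set x := Real.sqrt t with hxdef
    have hx0 : 0 < x := Real.sqrt_pos.2 htp
    have hx2 : x ^ 2 = t := Real.sq_sqrt htp.le
    have habs : |t| = t := abs_of_pos htp
    rw [habs] at ht ⊢
    have hx1 : x ≤ π / 2 := by
      rw [hxdef]
      calc Real.sqrt t ≤ Real.sqrt (π ^ 2 / 4) := Real.sqrt_le_sqrt ht
        _ = π / 2 := by
            rw [show π ^ 2 / 4 = (π / 2) ^ 2 by ring, Real.sqrt_sq (by linarith)]
    have hsin : 0 < Real.sin x :=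
      Real.sin_pos_of_pos_of_lt_pi hx0 (lt_of_le_of_lt hx1 (by linarith))
    have hPhi : Phi t = x * (Real.cos x / Real.sin x) := by
      rw [Phi, if_neg (by linarith), if_neg (by linarith)]
    have hup : Phi t ≤ 1 := by
      rw [hPhi, ← mul_div_assoc, div_le_one hsin]
      linarith [L3_nonneg hx0.le (by linarith : x ≤ π)]
    have hlo : 1 - 4 * t / π ^ 2 ≤ Phi t := by
      rw [hPhi, ← mul_div_assoc, le_div_iff₀ hsin]
      have hkey := key_trig hx0 hx1
      rw [hx2] at hkey
      have : 4 / π ^ 2 * (t * Real.sin x) = 4 * t / π ^ 2 * Real.sin x := by ring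
      rw [this] at hkey
      nlinarith
    rw [abs_le]
    constructor
    · linarith
    · have : 0 ≤ 4 * t / π ^ 2 := by positivity
      linarith
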